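/- For every positive integer n, the sum over k from 1 to n of H_{n−k}/(k(k+1)) equals ((n−1)/(n+1))·H_{n+1} − (n−1)/(n+1)^2. -/

import Mathlib

/-- The `n`-th harmonic number `H_n = ∑_{k=1}^n 1/k`, with `H_0 = 0`. -/
def H (n : ℕ) : ℚ := ∑ k ∈ Finset.range n, 1 / ((k : ℚ) + 1)

/-- The generalized harmonic number of order 2, `H_n^{(2)} = ∑_{k=1}^n 1/k^2`, with `H_0^{(2)} = 0`. -/
def H2 (n : ℕ) : ℚ := ∑ k ∈ Finset.range n, 1 / ((k : ℚ) + 1) ^ 2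

lemma H_succ (m : ℕ) : H (m + 1) = H m + 1 / ((m : ℚ) + 1) := by
  simp [H, Finset.sum_range_succ]

lemma sum_Icc_inv (n : ℕ) : ∑ k ∈ Finset.Icc 1 n, (1 : ℚ) / k = H n := by
  induction n with
  | zero => simp [H]
  | succ n ih =>
    rw [Finset.sum_Icc_succ_top (by omega), ih, H_succ]
    push_cast; ring

lemma sum_Icc_inv_succ (n : ℕ) : ∑ k ∈ Finset.Icc 1 n, (1 : ℚ) / ((k : ℚ) + 1) = H (n + 1) - 1 := by
  induction n with
  | zero => simp [H]
  | succ n ih =>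
    rw [Finset.sum_Icc_succ_top (by omega), ih, H_succ (n + 1)]
    push_cast; ring

lemma sum_reflect (n : ℕ) : ∑ k ∈ Finset.Icc 1 n, (1 : ℚ) / ((n : ℚ) + 1 - k) = H n := by
  rw [← sum_Icc_inv n]
  apply Finset.sum_nbij' (fun k => n + 1 - k) (fun k => n + 1 - k)
  · intro a ha; simp only [Finset.mem_Icc] at *; omega
  · intro a ha; simp only [Finset.mem_Icc] at *; omega
  · intro a ha; simp only [Finset.mem_Icc] at ha; omega
  · intro a ha; simp only [Finset.mem_Icc] at ha; omega
  · intro a ha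
    simp only [Finset.mem_Icc] at ha
    have : ((n + 1 - a : ℕ) : ℚ) = (n : ℚ) + 1 - a := by
      have := ha.2; push_cast [Nat.cast_sub (by omega : a ≤ n + 1)]; ring
    rw [this]

lemma Tlem (n : ℕ) : ∑ k ∈ Finset.Icc 1 n, 1 / (((n : ℚ) + 1 - k) * k * (k + 1)) =
    (2 / ((n : ℚ) + 1)) * H n - (1 / ((n : ℚ) + 2)) * (H (n + 1) - 1 + H n) := by
  have key : ∀ k ∈ Finset.Icc 1 n,
      (1 : ℚ) / (((n : ℚ) + 1 - k) * k * (k + 1)) =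
      (1 / ((n : ℚ) + 1)) * (1 / k) + (1 / ((n : ℚ) + 1)) * (1 / ((n : ℚ) + 1 - k))
      - (1 / ((n : ℚ) + 2)) * (1 / ((k : ℚ) + 1)) - (1 / ((n : ℚ) + 2)) * (1 / ((n : ℚ) + 1 - k)) := by
    intro k hk
    simp only [Finset.mem_Icc] at hk
    have hk0 : (k : ℚ) ≠ 0 := by
      have : (0 : ℚ) < k := by exact_mod_cast (by omega : 0 < k)
      exact this.ne'
    have hk1 : (k : ℚ) + 1 ≠ 0 := by positivity
    have hkn : (k : ℚ) ≤ n := by exact_mod_cast hk.2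
    have h1 : (n : ℚ) + 1 - k ≠ 0 := by linarith
    have h2 : (n : ℚ) + 1 ≠ 0 := by positivity
    have h3 : (n : ℚ) + 2 ≠ 0 := by positivity
    field_simp
    ring
  rw [Finset.sum_congr rfl key]
  simp only [Finset.sum_add_distrib, Finset.sum_sub_distrib, ← Finset.mul_sum,
    sum_Icc_inv, sum_reflect, sum_Icc_inv_succ]
  ring

theorem stmt_16 (n : ℕ) (hn : 0 < n) :
    ∑ k ∈ Finset.Icc 1 n, H (n - k) / ((k : ℚ) * ((k : ℚ) + 1)) =
      (((n : ℚ) - 1) / ((n : ℚ) + 1)) * H (n + 1) - ((n : ℚ) - 1) / ((n : ℚ) + 1) ^ 2 := by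
  induction n with
  | zero => omega
  | succ n ih =>
    rcases Nat.eq_zero_or_pos n with rfl | hn'
    · simp [H]
    · have step : ∀ k ∈ Finset.Icc 1 n,
          H (n + 1 - k) / ((k : ℚ) * ((k : ℚ) + 1)) =
          H (n - k) / ((k : ℚ) * ((k : ℚ) + 1)) + 1 / (((n : ℚ) + 1 - k) * k * (k + 1)) := by
        intro k hk
        simp only [Finset.mem_Icc] at hk
        have h1 : n + 1 - k = (n - k) + 1 := by omega
        have h2 : ((n - k : ℕ) : ℚ) + 1 = (n : ℚ) + 1 - k := by
          push_cast [Nat.cast_sub hk.2]; ring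
        rw [h1, H_succ, h2]
        have hk0 : (k : ℚ) ≠ 0 := by
          have : (0 : ℚ) < k := by exact_mod_cast (by omega : 0 < k)
          exact this.ne'
        have hk1 : (k : ℚ) + 1 ≠ 0 := by positivity
        have hkn : (k : ℚ) ≤ n := by exact_mod_cast hk.2
        have h3 : (n : ℚ) + 1 - k ≠ 0 := by linarith
        field_simp
      rw [Finset.sum_Icc_succ_top (by omega : 1 ≤ n + 1)]
      have : n + 1 - (n + 1) = 0 := by omega
      rw [this]
      rw [Finset.sum_congr rfl step, Finset.sum_add_distrib, ih hn', Tlem]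
      have hH2 : H (n + 1 + 1) = H n + 1 / ((n : ℚ) + 1) + 1 / ((n : ℚ) + 2) := by
        rw [H_succ, H_succ]; push_cast; ring
      have hH1 : H (n + 1) = H n + 1 / ((n : ℚ) + 1) := H_succ n
      have hH0 : H 0 = 0 := by simp [H]
      rw [hH2, hH1, hH0]
      have h2 : (n : ℚ) + 1 ≠ 0 := by positivity
      have h3 : (n : ℚ) + 2 ≠ 0 := by positivity
      push_cast
      field_simp
      ring
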